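/- Hyperbolicity of the two-phase flow system: let m, n, v, u, p_m, p_n ∈ ℝ with n ≠ 0 and (m·p_m + n·p_n)/n > 0, set c := √((m·p_m + n·p_n)/n), let ξ = (ξ₁, ξ₂) ∈ ℝ² with ξ ≠ 0, and set w := vξ₁ + uξ₂. Then the set of real eigenvalues of the matrix ξ₁A₁(U) + ξ₂A₂(U) (i.e. the set of λ ∈ ℝ with det(λ·I₄ − (ξ₁A₁(U)+ξ₂A₂(U))) = 0) is exactly {w − c·‖ξ‖, w, w + c·‖ξ‖}, where ‖ξ‖ = √(ξ₁²+ξ₂²); in particular all roots of the characteristic polynomial are real. -/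

import Mathlib

lemma my_det_fin_four (A : Matrix (Fin 4) (Fin 4) ℝ) : A.det =
    A 0 0 * (A 1 1 * (A 2 2 * A 3 3 - A 2 3 * A 3 2)
             - A 1 2 * (A 2 1 * A 3 3 - A 2 3 * A 3 1)
             + A 1 3 * (A 2 1 * A 3 2 - A 2 2 * A 3 1))
  - A 0 1 * (A 1 0 * (A 2 2 * A 3 3 - A 2 3 * A 3 2)
             - A 1 2 * (A 2 0 * A 3 3 - A 2 3 * A 3 0)
             + A 1 3 * (A 2 0 * A 3 2 - A 2 2 * A 3 0))
  + A 0 2 * (A 1 0 * (A 2 1 * A 3 3 - A 2 3 * A 3 1)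
             - A 1 1 * (A 2 0 * A 3 3 - A 2 3 * A 3 0)
             + A 1 3 * (A 2 0 * A 3 1 - A 2 1 * A 3 0))
  - A 0 3 * (A 1 0 * (A 2 1 * A 3 2 - A 2 2 * A 3 1)
             - A 1 1 * (A 2 0 * A 3 2 - A 2 2 * A 3 0)
             + A 1 2 * (A 2 0 * A 3 1 - A 2 1 * A 3 0)) := by
  rw [Matrix.det_succ_row_zero]
  have h1 : (Fin.succ 2 : Fin 4) = 3 := rfl
  have h2 : (Fin.castSucc 2 : Fin 4) = 2 := rfl
  simp [Fin.sum_univ_succ, Matrix.det_fin_three, Matrix.submatrix_apply, Fin.succAbove]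
  norm_num [h1, h2, Fin.lt_def]
  ring



/-- The coefficient matrix `A₁(U)` of the quasilinear two-phase flow system,
for `U = (m,n,v,u)` and pressure partial derivatives `pm, pn`. -/
noncomputable def A1 (m n v u pm pn : ℝ) : Matrix (Fin 4) (Fin 4) ℝ :=
  !![v, 0, m, 0;
     0, v, n, 0;
     pm / n, pn / n, v, 0;
     0, 0, 0, v]

/-- The coefficient matrix `A₂(U)` of the quasilinear two-phase flow system. -/
noncomputable def A2 (m n v u pm pn : ℝ) : Matrix (Fin 4) (Fin 4) ℝ :=
  !![u, 0, 0, m;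
     0, u, 0, n;
     0, 0, u, 0;
     pm / n, pn / n, 0, u]

/-- Hyperbolicity: if `(m·p_m+n·p_n)/n > 0`, `c = √((m·p_m+n·p_n)/n)` and
`ξ = (ξ₁,ξ₂) ≠ 0`, then the real eigenvalues of `ξ₁A₁(U)+ξ₂A₂(U)` are exactly
`{w − c‖ξ‖, w, w + c‖ξ‖}` with `w = vξ₁ + uξ₂` and `‖ξ‖ = √(ξ₁²+ξ₂²)`. -/
theorem eigenvalues_symbol (m n v u pm pn ξ1 ξ2 : ℝ) (hn : n ≠ 0)
    (hc : 0 < (m * pm + n * pn) / n) (hξ : (ξ1, ξ2) ≠ (0, 0)) :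
    {lam : ℝ |
        (lam • (1 : Matrix (Fin 4) (Fin 4) ℝ)
          - (ξ1 • A1 m n v u pm pn + ξ2 • A2 m n v u pm pn)).det = 0}
      = {v * ξ1 + u * ξ2
            - Real.sqrt ((m * pm + n * pn) / n) * Real.sqrt (ξ1 ^ 2 + ξ2 ^ 2),
         v * ξ1 + u * ξ2,
         v * ξ1 + u * ξ2
            + Real.sqrt ((m * pm + n * pn) / n) * Real.sqrt (ξ1 ^ 2 + ξ2 ^ 2)} := by
  set K := (m * pm + n * pn) / n with hK
  set S := ξ1 ^ 2 + ξ2 ^ 2 with hS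
  set w := v * ξ1 + u * ξ2 with hw
  have hS0 : 0 < S := by
    rcases (not_and_or.mp (fun h => hξ (Prod.ext h.1 h.2))) with h | h
    · positivity
    · positivity
  have hcs : (Real.sqrt K * Real.sqrt S) ^ 2 = K * S := by
    rw [mul_pow, Real.sq_sqrt hc.le, Real.sq_sqrt hS0.le]
  have hcs0 : 0 < Real.sqrt K * Real.sqrt S :=
    mul_pos (Real.sqrt_pos.mpr hc) (Real.sqrt_pos.mpr hS0)
  ext lam
  have hdet : (lam • (1 : Matrix (Fin 4) (Fin 4) ℝ)
          - (ξ1 • A1 m n v u pm pn + ξ2 • A2 m n v u pm pn)).det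
      = (lam - w)^2 * ((lam - w)^2 - K * S) := by
    rw [my_det_fin_four]
    simp [A1, A2, Matrix.smul_apply, Matrix.one_apply, Matrix.sub_apply, Matrix.add_apply,
      hK, hS, hw]
    field_simp
    ring
  simp only [Set.mem_setOf_eq, hdet, Set.mem_insert_iff, Set.mem_singleton_iff]
  constructor
  · intro h
    rcases mul_eq_zero.mp h with h | h
    · right; left
      have := pow_eq_zero_iff (n := 2) (by norm_num) |>.mp h
      linarith
    · have h2 : (lam - w) ^ 2 = (Real.sqrt K * Real.sqrt S) ^ 2 := by
        rw [hcs]; linarith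
      rcases sq_eq_sq_iff_eq_or_eq_neg.mp h2 with h3 | h3
      · right; right; linarith
      · left; linarith
  · intro h
    rcases h with h | h | h <;> subst h
    · have : (w - Real.sqrt K * Real.sqrt S - w) ^ 2 = K * S := by
        rw [show w - Real.sqrt K * Real.sqrt S - w = -(Real.sqrt K * Real.sqrt S) by ring,
          neg_sq, hcs]
      rw [this]; ring
    · simp
    · have : (w + Real.sqrt K * Real.sqrt S - w) ^ 2 = K * S := by
        rw [show w + Real.sqrt K * Real.sqrt S - w = Real.sqrt K * Real.sqrt S by ring, hcs]
      rw [this]; ring
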